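/- Let a ≥ 1 be a real number, let n ≥ 4a be an integer, let f: {0,1}^n → ℝ be a nonnegative a-self-bounding function, and let ρ ∈ [0,1]. Then the noise stability of f satisfies S_ρ(f) = E[f · T_ρ f] ≥ (1 − (1−ρ)/(2(1 − (a−1)/n)))^a · ‖f‖_2². -/

import Mathlib

noncomputable section

/-- A function `f : {0,1}^n → ℝ` is `a`-self-bounding. -/
def SelfBounding (n : ℕ) (a : ℝ) (f : (Fin n → Bool) → ℝ) : Prop :=
  ∀ x : Fin n → Bool,
    (∀ i : Fin n,
      f x - min (f (Function.update x i false)) (f (Function.update x i true)) ≤ 1) ∧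
    ∑ i : Fin n,
      (f x - min (f (Function.update x i false)) (f (Function.update x i true))) ≤ a * f x

/-- Expectation with respect to the uniform distribution on `{0,1}^n`. -/
def expect (n : ℕ) (g : (Fin n → Bool) → ℝ) : ℝ :=
  (∑ x : Fin n → Bool, g x) / 2 ^ n

/-- The noise operator `T_ρ`. -/
def noiseOp (n : ℕ) (ρ : ℝ) (f : (Fin n → Bool) → ℝ) (x : Fin n → Bool) : ℝ :=
  ∑ y : Fin n → Bool,
    (∏ i : Fin n, if y i = x i then (1 + ρ) / 2 else (1 - ρ) / 2) * f y

namespace NSB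

variable {n : ℕ}

/-- kernel factor -/
def w (x : Fin n → Bool) (ρ : ℝ) (y : Fin n → Bool) (i : Fin n) : ℝ :=
  if y i = x i then (1 + ρ) / 2 else (1 - ρ) / 2

/-- derivative of the kernel factor -/
def w' (x y : Fin n → Bool) (i : Fin n) : ℝ :=
  if y i = x i then 1 / 2 else -(1 / 2)

def flip (i : Fin n) (y : Fin n → Bool) : Fin n → Bool := Function.update y i (!(y i))

def mu (f : (Fin n → Bool) → ℝ) (i : Fin n) (y : Fin n → Bool) : ℝ :=
  f y - min (f (Function.update y i false)) (f (Function.update y i true))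

lemma hasDerivAt_w (x y : Fin n → Bool) (i : Fin n) (ρ : ℝ) :
    HasDerivAt (fun ρ => w x ρ y i) (w' x y i) ρ := by
  unfold w w'
  split_ifs with h
  · simpa using ((hasDerivAt_id ρ).const_add 1).div_const 2
  · have : HasDerivAt (fun ρ : ℝ => (1 - ρ) / 2) (-1 / 2) ρ :=
      ((hasDerivAt_id ρ).const_sub 1).div_const 2
    simpa [neg_div] using this

lemma w_nonneg (x : Fin n → Bool) {ρ : ℝ} (h0 : 0 ≤ ρ) (h1 : ρ ≤ 1) (y : Fin n → Bool)
    (i : Fin n) : 0 ≤ w x ρ y i := by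
  unfold w; split_ifs <;> nlinarith

lemma prod_w_nonneg (x : Fin n → Bool) {ρ : ℝ} (h0 : 0 ≤ ρ) (h1 : ρ ≤ 1)
    (y : Fin n → Bool) (u : Finset (Fin n)) : 0 ≤ ∏ j ∈ u, w x ρ y j :=
  Finset.prod_nonneg fun j _ => w_nonneg x h0 h1 y j

lemma noiseOp_eq (ρ : ℝ) (f : (Fin n → Bool) → ℝ) (x : Fin n → Bool) :
    noiseOp n ρ f x = ∑ y : Fin n → Bool, (∏ i : Fin n, w x ρ y i) * f y := rfl

lemma min_le_update (f : (Fin n → Bool) → ℝ) (i : Fin n) (y : Fin n → Bool) (b : Bool) :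
    min (f (Function.update y i false)) (f (Function.update y i true)) ≤
      f (Function.update y i b) := by
  cases b
  · exact min_le_left _ _
  · exact min_le_right _ _

lemma mu_nonneg (f : (Fin n → Bool) → ℝ) (i : Fin n) (y : Fin n → Bool) : 0 ≤ mu f i y := by
  have h := min_le_update f i y (y i)
  rw [Function.update_eq_self] at h
  simpa [mu] using h

lemma sub_flip_le_mu (f : (Fin n → Bool) → ℝ) (i : Fin n) (y : Fin n → Bool) :
    f y - f (flip i y) ≤ mu f i y := by
  have h := min_le_update f i y (!(y i))
  unfold mu flip
  linarith

lemma flip_apply_ne (i j : Fin n) (y : Fin n → Bool) (h : j ≠ i) : flip i y j = y j :=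
  Function.update_of_ne h _ _

lemma flip_apply_self (i : Fin n) (y : Fin n → Bool) : flip i y i = !(y i) :=
  Function.update_self _ _ _

lemma flip_flip (i : Fin n) (y : Fin n → Bool) : flip i (flip i y) = y := by
  funext j
  by_cases h : j = i
  · subst h; simp [flip]
  · simp [flip, Function.update_of_ne h]

lemma prod_w_flip (x : Fin n → Bool) (ρ : ℝ) (i : Fin n) (y : Fin n → Bool) :
    ∏ j ∈ Finset.univ.erase i, w x ρ (flip i y) j = ∏ j ∈ Finset.univ.erase i, w x ρ y j := by
  refine Finset.prod_congr rfl fun j hj => ?_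
  have hne : j ≠ i := (Finset.mem_erase.mp hj).1
  simp [w, flip_apply_ne i j y hne]

/- linearity and monotonicity of noiseOp in the function argument -/
lemma noiseOp_mono {ρ : ℝ} (h0 : 0 ≤ ρ) (h1 : ρ ≤ 1) {g h : (Fin n → Bool) → ℝ}
    (hgh : ∀ y, g y ≤ h y) (x : Fin n → Bool) :
    noiseOp n ρ g x ≤ noiseOp n ρ h x := by
  unfold noiseOp
  refine Finset.sum_le_sum fun y _ => ?_
  have := prod_w_nonneg x h0 h1 y Finset.univ
  exact mul_le_mul_of_nonneg_left (hgh y) (by simpa [w] using this)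

lemma noiseOp_sum (ρ : ℝ) (g : Fin n → (Fin n → Bool) → ℝ) (x : Fin n → Bool) :
    noiseOp n ρ (fun y => ∑ i : Fin n, g i y) x = ∑ i : Fin n, noiseOp n ρ (g i) x := by
  unfold noiseOp
  rw [Finset.sum_comm]
  exact Finset.sum_congr rfl fun y _ => by rw [Finset.mul_sum]

lemma noiseOp_const_mul (ρ : ℝ) (c : ℝ) (g : (Fin n → Bool) → ℝ) (x : Fin n → Bool) :
    noiseOp n ρ (fun y => c * g y) x = c * noiseOp n ρ g x := by
  unfold noiseOp
  rw [Finset.mul_sum]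
  exact Finset.sum_congr rfl fun y _ => by ring

lemma noiseOp_nonneg {ρ : ℝ} (h0 : 0 ≤ ρ) (h1 : ρ ≤ 1) {g : (Fin n → Bool) → ℝ}
    (hg : ∀ y, 0 ≤ g y) (x : Fin n → Bool) : 0 ≤ noiseOp n ρ g x := by
  unfold noiseOp
  refine Finset.sum_nonneg fun y _ => mul_nonneg ?_ (hg y)
  simpa [w] using prod_w_nonneg x h0 h1 y Finset.univ

/-- the explicit derivative of `ρ ↦ noiseOp n ρ f x` -/
def der (f : (Fin n → Bool) → ℝ) (x : Fin n → Bool) (ρ : ℝ) : ℝ :=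
  ∑ y : Fin n → Bool,
    (∑ i : Fin n, (∏ j ∈ Finset.univ.erase i, w x ρ y j) * w' x y i) * f y

lemma hasDerivAt_noiseOp (f : (Fin n → Bool) → ℝ) (x : Fin n → Bool) (ρ : ℝ) :
    HasDerivAt (fun ρ => noiseOp n ρ f x) (der f x ρ) ρ := by
  have h : ∀ y : Fin n → Bool,
      HasDerivAt (fun ρ => (∏ i : Fin n, w x ρ y i) * f y)
        ((∑ i : Fin n, (∏ j ∈ Finset.univ.erase i, w x ρ y j) * w' x y i) * f y) ρ := by
    intro y
    have hp : HasDerivAt (fun ρ => ∏ i : Fin n, w x ρ y i)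
        (∑ i : Fin n, (∏ j ∈ Finset.univ.erase i, w x ρ y j) * w' x y i) ρ := by
      have := HasDerivAt.fun_finsetProd (u := (Finset.univ : Finset (Fin n)))
        (f := fun i ρ => w x ρ y i) (f' := fun i => w' x y i)
        (fun i _ => hasDerivAt_w x y i ρ)
      simpa [smul_eq_mul] using this
    exact hp.mul_const (f y)
  simpa [noiseOp_eq, der] using HasDerivAt.fun_sum (fun y _ => h y)

lemma reindex_flip (x : Fin n → Bool) (ρ : ℝ) (i : Fin n) (g : (Fin n → Bool) → ℝ) :
    ∑ y ∈ Finset.univ.filter (fun y : Fin n → Bool => ¬ (y i = x i)),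
        (∏ j ∈ Finset.univ.erase i, w x ρ y j) * g y
      = ∑ y ∈ Finset.univ.filter (fun y : Fin n → Bool => y i = x i),
        (∏ j ∈ Finset.univ.erase i, w x ρ y j) * g (flip i y) := by
  refine Finset.sum_nbij' (flip i) (flip i) ?_ ?_ ?_ ?_ ?_
  · intro y hy
    simp only [Finset.mem_filter, Finset.mem_univ, true_and] at hy ⊢
    rw [flip_apply_self]
    cases hyi : y i <;> cases hxi : x i <;> simp_all
  · intro y hy
    simp only [Finset.mem_filter, Finset.mem_univ, true_and] at hy ⊢
    rw [flip_apply_self, hy]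
    cases hxi : x i <;> simp
  · intro y _; exact flip_flip i y
  · intro y _; exact flip_flip i y
  · intro y _
    rw [prod_w_flip, flip_flip]

lemma filter_sum_mu_le (x : Fin n → Bool) {ρ : ℝ} (h0 : 0 ≤ ρ) (h1 : ρ ≤ 1)
    (f : (Fin n → Bool) → ℝ) (i : Fin n) :
    ((1 + ρ) / 2) * ∑ y ∈ Finset.univ.filter (fun y : Fin n → Bool => y i = x i),
        (∏ j ∈ Finset.univ.erase i, w x ρ y j) * mu f i y
      ≤ noiseOp n ρ (mu f i) x := by
  rw [noiseOp_eq]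
  have hsplit :
      (∑ y : Fin n → Bool, (∏ j : Fin n, w x ρ y j) * mu f i y)
        = (∑ y ∈ Finset.univ.filter (fun y : Fin n → Bool => y i = x i),
            (∏ j : Fin n, w x ρ y j) * mu f i y)
          + ∑ y ∈ Finset.univ.filter (fun y : Fin n → Bool => ¬ (y i = x i)),
            (∏ j : Fin n, w x ρ y j) * mu f i y :=
    (Finset.sum_filter_add_sum_filter_not _ _ _).symm
  rw [hsplit]
  have h2 : 0 ≤ ∑ y ∈ Finset.univ.filter (fun y : Fin n → Bool => ¬ (y i = x i)),
      (∏ j : Fin n, w x ρ y j) * mu f i y := by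
    refine Finset.sum_nonneg fun y _ => mul_nonneg ?_ (mu_nonneg f i y)
    exact prod_w_nonneg x h0 h1 y Finset.univ
  have h1' : ((1 + ρ) / 2) * ∑ y ∈ Finset.univ.filter (fun y : Fin n → Bool => y i = x i),
        (∏ j ∈ Finset.univ.erase i, w x ρ y j) * mu f i y
      = ∑ y ∈ Finset.univ.filter (fun y : Fin n → Bool => y i = x i),
        (∏ j : Fin n, w x ρ y j) * mu f i y := by
    rw [Finset.mul_sum]
    refine Finset.sum_congr rfl fun y hy => ?_
    have hyi : y i = x i := by simpa using (Finset.mem_filter.mp hy).2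
    have hprod : (∏ j : Fin n, w x ρ y j)
        = w x ρ y i * ∏ j ∈ Finset.univ.erase i, w x ρ y j :=
      (Finset.mul_prod_erase Finset.univ _ (Finset.mem_univ i)).symm
    rw [hprod]
    have : w x ρ y i = (1 + ρ) / 2 := by simp [w, hyi]
    rw [this]; ring
  linarith [h1'.le, h2]

lemma inner_bound (x : Fin n → Bool) {ρ : ℝ} (h0 : 0 ≤ ρ) (h1 : ρ ≤ 1)
    (f : (Fin n → Bool) → ℝ) (i : Fin n) :
    ∑ y : Fin n → Bool, (∏ j ∈ Finset.univ.erase i, w x ρ y j) * w' x y i * f y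
      ≤ (1 / (1 + ρ)) * noiseOp n ρ (mu f i) x := by
  have hsplit :
      (∑ y : Fin n → Bool, (∏ j ∈ Finset.univ.erase i, w x ρ y j) * w' x y i * f y)
        = (∑ y ∈ Finset.univ.filter (fun y : Fin n → Bool => y i = x i),
            (∏ j ∈ Finset.univ.erase i, w x ρ y j) * w' x y i * f y)
          + ∑ y ∈ Finset.univ.filter (fun y : Fin n → Bool => ¬ (y i = x i)),
            (∏ j ∈ Finset.univ.erase i, w x ρ y j) * w' x y i * f y :=
    (Finset.sum_filter_add_sum_filter_not _ _ _).symm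
  have hA : (∑ y ∈ Finset.univ.filter (fun y : Fin n → Bool => y i = x i),
        (∏ j ∈ Finset.univ.erase i, w x ρ y j) * w' x y i * f y)
      = (1/2) * ∑ y ∈ Finset.univ.filter (fun y : Fin n → Bool => y i = x i),
        (∏ j ∈ Finset.univ.erase i, w x ρ y j) * f y := by
    rw [Finset.mul_sum]
    refine Finset.sum_congr rfl fun y hy => ?_
    have hyi : y i = x i := by simpa using (Finset.mem_filter.mp hy).2
    simp [w', hyi]; ring
  have hB : (∑ y ∈ Finset.univ.filter (fun y : Fin n → Bool => ¬ (y i = x i)),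
        (∏ j ∈ Finset.univ.erase i, w x ρ y j) * w' x y i * f y)
      = -(1/2) * ∑ y ∈ Finset.univ.filter (fun y : Fin n → Bool => y i = x i),
        (∏ j ∈ Finset.univ.erase i, w x ρ y j) * f (flip i y) := by
    rw [← reindex_flip x ρ i f, Finset.mul_sum]
    refine Finset.sum_congr rfl fun y hy => ?_
    have hyi : ¬ (y i = x i) := by simpa using (Finset.mem_filter.mp hy).2
    simp [w', hyi]; ring
  rw [hsplit, hA, hB]
  have hstep : (1/2) * (∑ y ∈ Finset.univ.filter (fun y : Fin n → Bool => y i = x i),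
        (∏ j ∈ Finset.univ.erase i, w x ρ y j) * f y)
      + (-(1/2) * ∑ y ∈ Finset.univ.filter (fun y : Fin n → Bool => y i = x i),
        (∏ j ∈ Finset.univ.erase i, w x ρ y j) * f (flip i y))
      ≤ (1/2) * ∑ y ∈ Finset.univ.filter (fun y : Fin n → Bool => y i = x i),
        (∏ j ∈ Finset.univ.erase i, w x ρ y j) * mu f i y := by
    rw [neg_mul, ← sub_eq_add_neg, ← mul_sub, ← Finset.sum_sub_distrib]
    have : (∑ y ∈ Finset.univ.filter (fun y : Fin n → Bool => y i = x i),
        ((∏ j ∈ Finset.univ.erase i, w x ρ y j) * f y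
         - (∏ j ∈ Finset.univ.erase i, w x ρ y j) * f (flip i y)))
        ≤ ∑ y ∈ Finset.univ.filter (fun y : Fin n → Bool => y i = x i),
        (∏ j ∈ Finset.univ.erase i, w x ρ y j) * mu f i y := by
      refine Finset.sum_le_sum fun y _ => ?_
      rw [← mul_sub]
      exact mul_le_mul_of_nonneg_left (sub_flip_le_mu f i y)
        (prod_w_nonneg x h0 h1 y _)
    linarith
  refine hstep.trans ?_
  have hkey := filter_sum_mu_le x h0 h1 f i
  have hpos : (0:ℝ) < 1 + ρ := by linarith
  have hinv : (0:ℝ) ≤ 1 / (1 + ρ) := by positivity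
  have h2 := mul_le_mul_of_nonneg_left hkey hinv
  have h3 : (1:ℝ)/2 * (∑ y ∈ Finset.univ.filter (fun y : Fin n → Bool => y i = x i),
        (∏ j ∈ Finset.univ.erase i, w x ρ y j) * mu f i y)
      = 1/(1+ρ) * ((1+ρ)/2 * ∑ y ∈ Finset.univ.filter (fun y : Fin n → Bool => y i = x i),
        (∏ j ∈ Finset.univ.erase i, w x ρ y j) * mu f i y) := by
    field_simp
  linarith [h2, h3.le, h3.ge]

lemma der_le (a : ℝ) (f : (Fin n → Bool) → ℝ) (hf : SelfBounding n a f)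
    (x : Fin n → Bool) {ρ : ℝ} (h0 : 0 ≤ ρ) (h1 : ρ ≤ 1) :
    der f x ρ ≤ (a / (1 + ρ)) * noiseOp n ρ f x := by
  have hswap : der f x ρ
      = ∑ i : Fin n, ∑ y : Fin n → Bool,
          (∏ j ∈ Finset.univ.erase i, w x ρ y j) * w' x y i * f y := by
    unfold der
    rw [Finset.sum_comm]
    · exact Finset.sum_congr rfl fun y _ => by rw [Finset.sum_mul]
  rw [hswap]
  have hpos : (0:ℝ) ≤ 1 / (1 + ρ) := by positivity
  calc (∑ i : Fin n, ∑ y : Fin n → Bool,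
          (∏ j ∈ Finset.univ.erase i, w x ρ y j) * w' x y i * f y)
      ≤ ∑ i : Fin n, (1 / (1 + ρ)) * noiseOp n ρ (mu f i) x :=
        Finset.sum_le_sum fun i _ => inner_bound x h0 h1 f i
    _ = (1 / (1 + ρ)) * ∑ i : Fin n, noiseOp n ρ (mu f i) x := by
        rw [Finset.mul_sum]
    _ = (1 / (1 + ρ)) * noiseOp n ρ (fun y => ∑ i : Fin n, mu f i y) x := by
        rw [noiseOp_sum]
    _ ≤ (1 / (1 + ρ)) * noiseOp n ρ (fun y => a * f y) x := by
        refine mul_le_mul_of_nonneg_left ?_ hpos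
        exact noiseOp_mono h0 h1 (fun y => (hf y).2) x
    _ = (a / (1 + ρ)) * noiseOp n ρ f x := by
        rw [noiseOp_const_mul]; ring

lemma noiseOp_one (f : (Fin n → Bool) → ℝ) (x : Fin n → Bool) :
    noiseOp n 1 f x = f x := by
  unfold noiseOp
  have hker : ∀ y : Fin n → Bool,
      (∏ i : Fin n, if y i = x i then ((1:ℝ) + 1) / 2 else (1 - 1) / 2)
        = if y = x then 1 else 0 := by
    intro y
    by_cases h : y = x
    · subst h; simp
    · rw [if_neg h]
      have : ∃ i, y i ≠ x i := Function.ne_iff.mp h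
      obtain ⟨i, hi⟩ := this
      exact Finset.prod_eq_zero (Finset.mem_univ i) (by simp [hi])
  calc (∑ y : Fin n → Bool,
      (∏ i : Fin n, if y i = x i then ((1:ℝ) + 1) / 2 else (1 - 1) / 2) * f y)
      = ∑ y : Fin n → Bool, (if y = x then (1:ℝ) else 0) * f y :=
        Finset.sum_congr rfl fun y _ => by rw [hker y]
    _ = f x := by simp [Finset.sum_ite_eq']

/-- The key pointwise bound: `T_ρ f (x) ≥ ((1+ρ)/2)^a f(x)`. -/
lemma pointwise_bound (a : ℝ) (f : (Fin n → Bool) → ℝ) (hf : SelfBounding n a f)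
    (hf0 : ∀ y, 0 ≤ f y) (x : Fin n → Bool) {ρ : ℝ} (hρ : ρ ∈ Set.Icc (0:ℝ) 1) :
    ((1 + ρ) / 2) ^ (a : ℝ) * f x ≤ noiseOp n ρ f x := by
  obtain ⟨h0, h1⟩ := hρ
  set G : ℝ → ℝ := fun ρ => noiseOp n ρ f x * ((1 + ρ) / 2) ^ (-a : ℝ) with hGdef
  have hu : ∀ ρ : ℝ, HasDerivAt (fun ρ : ℝ => (1 + ρ) / 2) (1 / 2) ρ := fun ρ => by
    simpa using ((hasDerivAt_id ρ).const_add 1).div_const 2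
  have hG : ∀ ρ : ℝ, 0 ≤ ρ → ρ ≤ 1 →
      HasDerivAt G (der f x ρ * ((1 + ρ) / 2) ^ (-a : ℝ)
        + noiseOp n ρ f x * (1 / 2 * (-a) * ((1 + ρ) / 2) ^ (-a - 1 : ℝ))) ρ := by
    intro ρ h0 h1
    have hne : ((1 + ρ) / 2 : ℝ) ≠ 0 := by positivity
    have hW : HasDerivAt (fun ρ : ℝ => ((1 + ρ) / 2) ^ (-a : ℝ))
        (1 / 2 * (-a) * ((1 + ρ) / 2) ^ (-a - 1 : ℝ)) ρ := by
      simpa [mul_comm, mul_assoc] using (hu ρ).rpow_const (p := (-a : ℝ)) (Or.inl hne)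
    exact (hasDerivAt_noiseOp f x ρ).mul hW
  have hderiv_nonpos : ∀ ρ ∈ Set.Ioo (0:ℝ) 1, deriv G ρ ≤ 0 := by
    intro ρ hρ
    obtain ⟨h0', h1'⟩ := hρ
    rw [(hG ρ h0'.le h1'.le).deriv]
    have hupos : (0:ℝ) < (1 + ρ) / 2 := by linarith
    have hΦ : 0 ≤ noiseOp n ρ f x := noiseOp_nonneg h0'.le h1'.le hf0 x
    have hW0 : (0:ℝ) ≤ ((1 + ρ) / 2) ^ (-a : ℝ) := Real.rpow_nonneg hupos.le _
    have hd := der_le a f hf x h0'.le h1'.le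
    have hident : ((1 + ρ) / 2 : ℝ) ^ (-a - 1 : ℝ)
        = ((1 + ρ) / 2) ^ (-a : ℝ) * (2 / (1 + ρ)) := by
      rw [show (-a - 1 : ℝ) = -a + (-1) by ring, Real.rpow_add hupos,
        Real.rpow_neg_one]
      congr 1
      field_simp
    have step1 : der f x ρ * ((1 + ρ) / 2) ^ (-a : ℝ)
        ≤ (a / (1 + ρ)) * noiseOp n ρ f x * ((1 + ρ) / 2) ^ (-a : ℝ) :=
      mul_le_mul_of_nonneg_right hd hW0
    have step2 : (a / (1 + ρ)) * noiseOp n ρ f x * ((1 + ρ) / 2) ^ (-a : ℝ)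
        + noiseOp n ρ f x * (1 / 2 * (-a) * ((1 + ρ) / 2) ^ (-a - 1 : ℝ)) = 0 := by
      rw [hident]
      have h1ρ : (1 + ρ : ℝ) ≠ 0 := by positivity
      field_simp
      ring
    linarith
  have hcont : ContinuousOn G (Set.Icc 0 1) := by
    intro ρ hρ
    exact (hG ρ hρ.1 hρ.2).continuousAt.continuousWithinAt
  have hdiff : DifferentiableOn ℝ G (interior (Set.Icc (0:ℝ) 1)) := by
    rw [interior_Icc]
    intro ρ hρ
    exact (hG ρ hρ.1.le hρ.2.le).differentiableAt.differentiableWithinAt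
  have hanti : AntitoneOn G (Set.Icc 0 1) := by
    refine antitoneOn_of_deriv_nonpos (convex_Icc 0 1) hcont hdiff ?_
    rw [interior_Icc]; exact hderiv_nonpos
  have hG1 : G 1 = f x := by
    rw [hGdef]
    simp only []
    rw [noiseOp_one]
    norm_num
  have hle : f x ≤ G ρ := by
    rw [← hG1]
    exact hanti ⟨h0, h1⟩ (Set.mem_Icc.mpr ⟨zero_le_one, le_refl 1⟩) h1
  have hupos : (0:ℝ) < (1 + ρ) / 2 := by linarith
  have hmul := mul_le_mul_of_nonneg_right hle (Real.rpow_nonneg hupos.le (a : ℝ))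
  have hcancel : ((1 + ρ) / 2 : ℝ) ^ (-a : ℝ) * ((1 + ρ) / 2) ^ (a : ℝ) = 1 := by
    rw [← Real.rpow_add hupos]
    norm_num
  calc ((1 + ρ) / 2) ^ (a : ℝ) * f x = f x * ((1 + ρ) / 2) ^ (a : ℝ) := by ring
    _ ≤ G ρ * ((1 + ρ) / 2) ^ (a : ℝ) := hmul
    _ = noiseOp n ρ f x := by
        rw [hGdef]
        simp only []
        rw [mul_assoc, hcancel, mul_one]

end NSB

theorem noise_stability_bound (n : ℕ) (a : ℝ) (ha : 1 ≤ a) (hn : 4 * a ≤ (n : ℝ))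
    (f : (Fin n → Bool) → ℝ) (hf0 : ∀ x, 0 ≤ f x) (hf : SelfBounding n a f)
    (ρ : ℝ) (hρ : ρ ∈ Set.Icc (0 : ℝ) 1) :
    (1 - (1 - ρ) / (2 * (1 - (a - 1) / (n : ℝ)))) ^ (a : ℝ) * expect n (fun x => (f x) ^ 2) ≤
      expect n (fun x => f x * noiseOp n ρ f x) := by
  obtain ⟨hρ0, hρ1⟩ := hρ
  have hn0 : (0:ℝ) < n := by linarith
  have hfrac : (a - 1) / (n : ℝ) ≤ 1 / 4 := by
    rw [div_le_div_iff₀ hn0 (by norm_num)]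
    linarith
  have hfrac0 : 0 ≤ (a - 1) / (n : ℝ) := div_nonneg (by linarith) hn0.le
  have h2β : (0:ℝ) < 2 * (1 - (a - 1) / (n : ℝ)) := by linarith
  have hc0 : 0 ≤ 1 - (1 - ρ) / (2 * (1 - (a - 1) / (n : ℝ))) := by
    have h : (1 - ρ) / (2 * (1 - (a - 1) / (n : ℝ))) ≤ 2/3 := by
      rw [div_le_iff₀ h2β]; nlinarith
    linarith
  have hcle : 1 - (1 - ρ) / (2 * (1 - (a - 1) / (n : ℝ))) ≤ (1 + ρ) / 2 := by
    have h : (1 - ρ) / 2 ≤ (1 - ρ) / (2 * (1 - (a - 1) / (n : ℝ))) := by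
      rw [div_le_div_iff₀ (by norm_num) h2β]
      nlinarith
    linarith
  have hrpow : (1 - (1 - ρ) / (2 * (1 - (a - 1) / (n : ℝ)))) ^ (a : ℝ)
      ≤ ((1 + ρ) / 2) ^ (a : ℝ) :=
    Real.rpow_le_rpow hc0 hcle (by linarith)
  have hpt : ∀ x, (1 - (1 - ρ) / (2 * (1 - (a - 1) / (n : ℝ)))) ^ (a : ℝ) * f x ^ 2
      ≤ f x * noiseOp n ρ f x := by
    intro x
    have hq1 : (1 - (1 - ρ) / (2 * (1 - (a - 1) / (n : ℝ)))) ^ (a : ℝ) * f x ^ 2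
        ≤ ((1 + ρ) / 2) ^ (a : ℝ) * f x ^ 2 :=
      mul_le_mul_of_nonneg_right hrpow (sq_nonneg _)
    have hq3 := NSB.pointwise_bound a f hf hf0 x (Set.mem_Icc.mpr ⟨hρ0, hρ1⟩)
    have hq4 := mul_le_mul_of_nonneg_left hq3 (hf0 x)
    have hq2 : ((1 + ρ) / 2) ^ (a : ℝ) * f x ^ 2 ≤ f x * noiseOp n ρ f x := by
      calc ((1 + ρ) / 2) ^ (a : ℝ) * f x ^ 2
          = f x * (((1 + ρ) / 2) ^ (a : ℝ) * f x) := by ring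
        _ ≤ f x * noiseOp n ρ f x := hq4
    linarith
  have hsum : (∑ x : Fin n → Bool,
        (1 - (1 - ρ) / (2 * (1 - (a - 1) / (n : ℝ)))) ^ (a : ℝ) * f x ^ 2)
      ≤ ∑ x : Fin n → Bool, f x * noiseOp n ρ f x :=
    Finset.sum_le_sum fun x _ => hpt x
  unfold expect
  rw [← mul_div_assoc]
  refine div_le_div_of_nonneg_right ?_ (by positivity)
  rw [Finset.mul_sum]
  simpa using hsum
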